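/- Suppose the correlation matrices are identity: R_{I,k} = R_{I,E} = I_N and R_{B,k} = R_{B,E} = I_M. Then for any unitary diagonal Φ, R_k = β_{2,k} I_M + β_{I,k} H₁ H₁^H is independent of Φ; in particular, tr(R_k) = β_{2,k} M + β_{I,k} tr(H₁ H₁^H) and tr(R_k R_i) = β_{2,k}β_{2,i} M + (β_{2,k}β_{I,i} + β_{I,k}β_{2,i}) tr(H₁ H₁^H) + β_{I,k}β_{I,i} tr((H₁ H₁^H)²), none of which depend on Φ. -/

import Mathlib

open Matrix Complex

/-- Under uncorrelated Rayleigh fading (`R_{I,k} = I_N`, `R_{B,k} = I_M`), for any unitary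
diagonal `Φ = diag φ`, the effective covariance
`R_k = β_{2,k} I + β_{I,k} H₁ Φ I Φᴴ H₁ᴴ = β_{2,k} I + β_{I,k} H₁ H₁ᴴ` is independent of `Φ`,
with `tr R_k = β_{2,k} M + β_{I,k} tr(H₁H₁ᴴ)` and
`tr(R_k R_i) = β_{2,k}β_{2,i} M + (β_{2,k}β_{I,i} + β_{I,k}β_{2,i}) tr(H₁H₁ᴴ)
 + β_{I,k}β_{I,i} tr((H₁H₁ᴴ)²)`. -/
theorem uncorrelated_rayleigh_phase_independence (M N : ℕ)
    (H : Matrix (Fin M) (Fin N) ℂ) (β2k β2i βIk βIi : ℝ)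
    (hβ2k : 0 < β2k) (hβ2i : 0 < β2i) (hβIk : 0 < βIk) (hβIi : 0 < βIi)
    (φ : Fin N → ℂ) (hφ : ∀ n, ‖φ n‖ = 1)
    (Rk Ri : Matrix (Fin M) (Fin M) ℂ)
    (hRk : Rk = (β2k : ℂ) • (1 : Matrix (Fin M) (Fin M) ℂ)
      + (βIk : ℂ) • (H * Matrix.diagonal φ * (1 : Matrix (Fin N) (Fin N) ℂ)
          * (Matrix.diagonal φ)ᴴ * Hᴴ))
    (hRi : Ri = (β2i : ℂ) • (1 : Matrix (Fin M) (Fin M) ℂ)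
      + (βIi : ℂ) • (H * Matrix.diagonal φ * (1 : Matrix (Fin N) (Fin N) ℂ)
          * (Matrix.diagonal φ)ᴴ * Hᴴ)) :
    Rk = (β2k : ℂ) • (1 : Matrix (Fin M) (Fin M) ℂ) + (βIk : ℂ) • (H * Hᴴ) ∧
    Rk.trace = (β2k : ℂ) * M + (βIk : ℂ) * (H * Hᴴ).trace ∧
    (Rk * Ri).trace = (β2k : ℂ) * (β2i : ℂ) * M
      + ((β2k : ℂ) * (βIi : ℂ) + (βIk : ℂ) * (β2i : ℂ)) * (H * Hᴴ).trace
      + (βIk : ℂ) * (βIi : ℂ) * ((H * Hᴴ) * (H * Hᴴ)).trace := by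
  have hdiag : Matrix.diagonal φ * (Matrix.diagonal φ)ᴴ = (1 : Matrix (Fin N) (Fin N) ℂ) := by
    rw [Matrix.conjTranspose, Matrix.diagonal_transpose, Matrix.diagonal_map (by simp),
      Matrix.diagonal_mul_diagonal]
    rw [← Matrix.diagonal_one]
    have h1 : (fun i => φ i * star (φ i)) = fun _ : Fin N => (1 : ℂ) := by
      funext i
      simp [Complex.mul_conj, Complex.normSq_eq_norm_sq, hφ i]
    rw [h1]
  have key : H * Matrix.diagonal φ * (1 : Matrix (Fin N) (Fin N) ℂ)
      * (Matrix.diagonal φ)ᴴ * Hᴴ = H * Hᴴ := by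
    rw [Matrix.mul_one, Matrix.mul_assoc H, hdiag, Matrix.mul_one]
  rw [key] at hRk hRi
  refine ⟨hRk, ?_, ?_⟩
  · rw [hRk]
    simp [Matrix.trace_add, Matrix.trace_smul, Matrix.trace_one, smul_eq_mul]
  · rw [hRk, hRi]
    simp only [Matrix.add_mul, Matrix.mul_add, Matrix.smul_mul, Matrix.mul_smul,
      Matrix.trace_add, Matrix.trace_smul, Matrix.one_mul, Matrix.mul_one,
      Matrix.trace_one, smul_eq_mul]
    simp [Fintype.card_fin]
    push_cast
    ring
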